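/- For the ECO-system with axiom (1) and rule (k) ↝ (k)^{k-1}(k+1), the number f_{n,k+1} of nodes at level n labeled k+1 equals the Stirling number of the second kind S(n,k); consequently f_n is the Bell number B_n, whose exponential generating function is exp(e^z - 1), and f_n satisfies the Bell recurrence f_{n+1} = ∑_{j=0}^n binom(n,j) f_j. -/

import Mathlib

open PowerSeries


variable {α : Type*} [DecidableEq α] {s : Finset α}

/-- Add a new element `a` to block `b` of a finpartition of `s`. -/
def Finpartition.addToPart (P : Finpartition s) {a : α} (ha : a ∉ s) {b : Finset α}
    (hb : b ∈ P.parts) : Finpartition (insert a s) where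
  parts := insert (insert a b) (P.parts.erase b)
  supIndep := by
    rw [Finset.supIndep_iff_pairwiseDisjoint]
    have hbs : b ⊆ s := P.le hb
    intro x hx y hy hxy
    simp only [Finset.coe_insert, Set.mem_insert_iff, Finset.coe_erase, Set.mem_diff,
      Finset.mem_coe, Finset.mem_singleton] at hx hy
    have key : ∀ c, c ∈ P.parts → c ≠ b → Disjoint (insert a b) c := by
      intro c hc hcb
      have h1 : Disjoint b c := P.disjoint hb hc (Ne.symm hcb)
      have h2 : a ∉ c := fun h => ha (P.le hc h)
      rw [Finset.disjoint_insert_left]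
      exact ⟨h2, h1⟩
    rcases hx with rfl | ⟨hx1, hx2⟩
    · rcases hy with rfl | ⟨hy1, hy2⟩
      · exact absurd rfl hxy
      · exact key _ hy1 (by simpa using hy2)
    · rcases hy with rfl | ⟨hy1, hy2⟩
      · exact (key _ hx1 (by simpa using hx2)).symm
      · exact P.disjoint hx1 hy1 hxy
  sup_parts := by
    have h1 : P.parts.sup id = s := P.sup_parts
    rw [Finset.sup_insert]
    have h2 : b ⊔ (P.parts.erase b).sup id = P.parts.sup id := by
      have := Finset.sup_insert (b := b) (s := P.parts.erase b) (f := id)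
      rw [Finset.insert_erase hb] at this
      simp only [id] at this
      exact this.symm
    have : insert a b ⊔ (P.parts.erase b).sup id = insert a (b ⊔ (P.parts.erase b).sup id) := by
      simp [Finset.insert_union]
    rw [id, this, h2, h1]
  bot_notMem := by
    intro h
    rcases Finset.mem_insert.mp h with h | h
    · exact (Finset.insert_ne_empty a b) h.symm
    · exact P.bot_notMem (Finset.mem_erase.mp h).2

theorem Finpartition.addToPart_parts (P : Finpartition s) {a : α} (ha : a ∉ s) {b : Finset α}
    (hb : b ∈ P.parts) : (P.addToPart ha hb).parts = insert (insert a b) (P.parts.erase b) := rfl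

theorem Finpartition.card_addToPart (P : Finpartition s) {a : α} (ha : a ∉ s) {b : Finset α}
    (hb : b ∈ P.parts) : (P.addToPart ha hb).parts.card = P.parts.card := by
  rw [addToPart_parts, Finset.card_insert_of_notMem, Finset.card_erase_of_mem hb]
  · have : P.parts.card ≠ 0 := Finset.card_ne_zero_of_mem hb
    omega
  · intro h
    have := P.le (Finset.mem_of_mem_erase h)
    exact ha (this (Finset.mem_insert_self a b))

namespace ECO

def res (a : α) (ha : a ∉ s) (P' : Finpartition (insert a s)) : Finpartition s :=
  (P'.avoid {a}).copy (by rw [Finset.sdiff_singleton_eq_erase, Finset.erase_insert ha])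

theorem mem_res {a : α} (ha : a ∉ s) (P' : Finpartition (insert a s)) {c : Finset α} :
    c ∈ (res a ha P').parts ↔
      (c ∈ P'.parts ∧ c ≠ P'.part a) ∨ (P'.part a ≠ {a} ∧ c = P'.part a \ {a}) := by
  have hamem : a ∈ insert a s := Finset.mem_insert_self a s
  have hpa : P'.part a ∈ P'.parts := P'.part_mem.mpr hamem
  have hapa : a ∈ P'.part a := P'.mem_part hamem
  rw [res, Finpartition.copy_parts, Finpartition.mem_avoid]
  constructor
  · rintro ⟨d, hd, hd2, rfl⟩
    by_cases hdp : d = P'.part a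
    · subst hdp
      right
      refine ⟨fun h => hd2 ?_, rfl⟩
      rw [h]
    · left
      have had : a ∉ d := fun h => hdp (P'.part_eq_of_mem hd h).symm
      have : d \ {a} = d := by
        rw [Finset.sdiff_singleton_eq_erase, Finset.erase_eq_of_notMem had]
      rw [this]
      exact ⟨hd, hdp⟩
  · rintro (⟨hc, hne⟩ | ⟨hne, rfl⟩)
    · have hac : a ∉ c := fun h => hne (P'.part_eq_of_mem hc h).symm
      refine ⟨c, hc, fun h => hac ?_, by
        rw [Finset.sdiff_singleton_eq_erase, Finset.erase_eq_of_notMem hac]⟩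
      have : c = {a} := Finset.subset_singleton_iff.mp h |>.resolve_left
        (Finset.nonempty_iff_ne_empty.mp (P'.nonempty_of_mem_parts hc))
      rw [this]; exact Finset.mem_singleton_self a
    · refine ⟨P'.part a, hpa, fun h => hne ?_, rfl⟩
      exact Finset.Subset.antisymm h (Finset.singleton_subset_iff.mpr hapa)

def opt (a : α) (ha : a ∉ s) (P' : Finpartition (insert a s)) :
    Option {b // b ∈ (res a ha P').parts} :=
  if h : P'.part a = {a} then none
  else some ⟨P'.part a \ {a}, by rw [mem_res ha]; exact Or.inr ⟨h, rfl⟩⟩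

theorem sigma_ext {P Q : Finpartition s} (h : P = Q) {o : Option {b // b ∈ P.parts}}
    {o' : Option {b // b ∈ Q.parts}} (h2 : o.map Subtype.val = o'.map Subtype.val) :
    (⟨P, o⟩ : Σ P : Finpartition s, Option {b // b ∈ P.parts}) = ⟨Q, o'⟩ := by
  subst h
  have : o = o' := Option.map_injective Subtype.val_injective h2
  rw [this]

def ins (a : α) (ha : a ∉ s) :
    (Σ P : Finpartition s, Option {b // b ∈ P.parts}) → Finpartition (insert a s)
  | ⟨P, none⟩ => P.extend (by simp [Finset.bot_eq_empty])
      (Finset.disjoint_singleton_right.mpr ha)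
      (by rw [Finset.sup_eq_union]; ext x; simp [or_comm])
  | ⟨P, some ⟨b, hb⟩⟩ => P.addToPart ha hb

theorem ins_none_parts (a : α) (ha : a ∉ s) (P : Finpartition s) :
    (ins a ha ⟨P, none⟩).parts = insert {a} P.parts := rfl

theorem ins_some_parts (a : α) (ha : a ∉ s) (P : Finpartition s) {b : Finset α}
    (hb : b ∈ P.parts) :
    (ins a ha ⟨P, some ⟨b, hb⟩⟩).parts = insert (insert a b) (P.parts.erase b) := rfl

def equivPart (a : α) (ha : a ∉ s) :
    Finpartition (insert a s) ≃ Σ P : Finpartition s, Option {b // b ∈ P.parts} where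
  toFun P' := ⟨res a ha P', opt a ha P'⟩
  invFun := ins a ha
  left_inv P' := by
    show ins a ha ⟨res a ha P', opt a ha P'⟩ = P'
    have hamem : a ∈ insert a s := Finset.mem_insert_self a s
    have hpa : P'.part a ∈ P'.parts := P'.part_mem.mpr hamem
    have hapa : a ∈ P'.part a := P'.mem_part hamem
    by_cases h : P'.part a = {a}
    · have ho : opt a ha P' = none := dif_pos h
      rw [ho]
      ext c
      rw [ins_none_parts]
      simp only [Finset.mem_insert, mem_res ha]
      constructor
      · rintro (rfl | ⟨hc, _⟩ | ⟨hne, _⟩)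
        · rw [← h]; exact hpa
        · exact hc
        · exact absurd h hne
      · intro hc
        by_cases hcp : c = P'.part a
        · left; rw [hcp, h]
        · right; left; exact ⟨hc, hcp⟩
    · have ho : opt a ha P' =
          some ⟨P'.part a \ {a}, by rw [mem_res ha]; exact Or.inr ⟨h, rfl⟩⟩ := dif_neg h
      rw [ho]
      have hib : insert a (P'.part a \ {a}) = P'.part a := by
        ext x
        simp only [Finset.mem_insert, Finset.mem_sdiff, Finset.mem_singleton]
        constructor
        · rintro (rfl | ⟨hx, _⟩)
          · exact hapa
          · exact hx
        · intro hx
          by_cases hxa : x = a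
          · exact Or.inl hxa
          · exact Or.inr ⟨hx, hxa⟩
      ext c
      rw [ins_some_parts]
      simp only [Finset.mem_insert, Finset.mem_erase, mem_res ha, hib]
      constructor
      · rintro (rfl | ⟨hne, (⟨hc, _⟩ | ⟨_, hc⟩)⟩)
        · exact hpa
        · exact hc
        · exact absurd hc hne
      · intro hc
        by_cases hcp : c = P'.part a
        · exact Or.inl hcp
        · refine Or.inr ⟨?_, Or.inl ⟨hc, hcp⟩⟩
          intro hceq
          have hcsub : c ⊆ P'.part a := hceq ▸ Finset.sdiff_subset
          have hcdisj : Disjoint c (P'.part a) := P'.disjoint hc hpa hcp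
          obtain ⟨x, hx⟩ := P'.nonempty_of_mem_parts hc
          exact Finset.disjoint_left.mp hcdisj hx (hcsub hx)
  right_inv x := by
    obtain ⟨P, o⟩ := x
    show (⟨res a ha (ins a ha ⟨P, o⟩), opt a ha (ins a ha ⟨P, o⟩)⟩ :
        Σ P : Finpartition s, Option {b // b ∈ P.parts}) = ⟨P, o⟩
    match o with
    | none =>
      set P'' := ins a ha (⟨P, none⟩ : Σ P : Finpartition s, Option {b // b ∈ P.parts})
        with hP''
      have hparts : P''.parts = insert {a} P.parts := rfl
      have hmem : ({a} : Finset α) ∈ P''.parts := by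
        rw [hparts]; exact Finset.mem_insert_self _ _
      have hpart : P''.part a = {a} := P''.part_eq_of_mem hmem (Finset.mem_singleton_self a)
      have hres : res a ha P'' = P := by
        ext c
        rw [mem_res ha, hpart]
        constructor
        · rintro (⟨hc, hne⟩ | ⟨hne, _⟩)
          · rw [hparts] at hc
            exact (Finset.mem_insert.mp hc).resolve_left hne
          · exact absurd rfl hne
        · intro hc
          have hne : c ≠ {a} := by
            rintro rfl
            exact ha (P.le hc (Finset.mem_singleton_self a))
          exact Or.inl ⟨by rw [hparts]; exact Finset.mem_insert_of_mem hc, hne⟩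
      have ho : opt a ha P'' = none := dif_pos hpart
      exact sigma_ext hres (by rw [ho]; simp)
    | some bb =>
      obtain ⟨b, hb⟩ := bb
      set P'' := ins a ha (⟨P, some ⟨b, hb⟩⟩ : Σ P : Finpartition s, Option {b // b ∈ P.parts})
        with hP''
      have hbs : b ⊆ s := P.le hb
      have hab : a ∉ b := fun h => ha (hbs h)
      have hbne : b.Nonempty := P.nonempty_of_mem_parts hb
      have hparts : P''.parts = insert (insert a b) (P.parts.erase b) := rfl
      have hmem : insert a b ∈ P''.parts := by rw [hparts]; exact Finset.mem_insert_self _ _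
      have hpart : P''.part a = insert a b :=
        P''.part_eq_of_mem hmem (Finset.mem_insert_self a b)
      have hpartne : P''.part a ≠ {a} := by
        rw [hpart]
        intro h
        obtain ⟨x, hx⟩ := hbne
        have hx2 : x ∈ ({a} : Finset α) := h ▸ Finset.mem_insert_of_mem hx
        rw [Finset.mem_singleton] at hx2
        exact hab (hx2 ▸ hx)
      have hsd : P''.part a \ {a} = b := by
        rw [hpart]
        ext x
        simp only [Finset.mem_sdiff, Finset.mem_insert, Finset.mem_singleton]
        constructor
        · rintro ⟨rfl | hx, hxa⟩
          · exact absurd rfl hxa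
          · exact hx
        · intro hx
          exact ⟨Or.inr hx, fun h => hab (h ▸ hx)⟩
      have hres : res a ha P'' = P := by
        ext c
        rw [mem_res ha, hsd, hpart]
        constructor
        · rintro (⟨hc, hne⟩ | ⟨_, rfl⟩)
          · rw [hparts] at hc
            rcases Finset.mem_insert.mp hc with rfl | hc
            · exact absurd rfl hne
            · exact Finset.mem_of_mem_erase hc
          · exact hb
        · intro hc
          by_cases hcb : c = b
          · exact Or.inr ⟨hpart ▸ hpartne, hcb⟩
          · refine Or.inl ⟨by
              rw [hparts]
              exact Finset.mem_insert_of_mem (Finset.mem_erase.mpr ⟨hcb, hc⟩), ?_⟩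
            intro h
            have : a ∈ c := h ▸ Finset.mem_insert_self a b
            exact ha (P.le hc this)
      have ho : opt a ha P'' =
          some ⟨P''.part a \ {a}, by rw [mem_res ha]; exact Or.inr ⟨hpartne, rfl⟩⟩ :=
        dif_neg hpartne
      refine sigma_ext hres ?_
      rw [ho]
      simp [hsd]

end ECO

namespace ECO

theorem ins_none_card (a : α) (ha : a ∉ s) (P : Finpartition s) :
    (ins a ha ⟨P, none⟩).parts.card = P.parts.card + 1 := by
  rw [ins_none_parts, Finset.card_insert_of_notMem]
  intro h
  exact ha (P.le h (Finset.mem_singleton_self a))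

theorem ins_some_card (a : α) (ha : a ∉ s) (P : Finpartition s) {b : Finset α}
    (hb : b ∈ P.parts) : (ins a ha ⟨P, some ⟨b, hb⟩⟩).parts.card = P.parts.card :=
  P.card_addToPart ha hb

def sigmaSubtype {β : Type*} {γ : β → Type*} (p : ∀ b, γ b → Prop) :
    {x : Σ b, γ b // p x.1 x.2} ≃ Σ b, {c : γ b // p b c} where
  toFun x := ⟨x.1.1, x.1.2, x.2⟩
  invFun y := ⟨⟨y.1, y.2.1⟩, y.2.2⟩
  left_inv := fun ⟨⟨b, c⟩, h⟩ => rfl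
  right_inv := fun ⟨b, c, h⟩ => rfl

def optionSubtypeEquiv {γ : Type*} {p : Option γ → Prop} (hn : ¬ p none)
    (hs : ∀ b, p (some b)) : {o : Option γ // p o} ≃ γ where
  toFun x := match x with
    | ⟨some b, _⟩ => b
    | ⟨none, h⟩ => absurd h hn
  invFun b := ⟨some b, hs b⟩
  left_inv := fun ⟨o, h⟩ => by
    cases o with
    | none => exact absurd h hn
    | some b => rfl
  right_inv b := rfl

theorem card_step {a : α} (ha : a ∉ s) (k : ℕ) :
    Nat.card {P' : Finpartition (insert a s) // P'.parts.card = k + 1}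
      = (k + 1) * Nat.card {P : Finpartition s // P.parts.card = k + 1}
        + Nat.card {P : Finpartition s // P.parts.card = k} := by
  classical
  have e1 : {P' : Finpartition (insert a s) // P'.parts.card = k + 1}
      ≃ {x : Σ P : Finpartition s, Option {b // b ∈ P.parts} //
          (ins a ha x).parts.card = k + 1} :=
    (equivPart a ha).subtypeEquiv (fun P' => by
      rw [show ins a ha (equivPart a ha P') = (equivPart a ha).symm (equivPart a ha P') from rfl,
        Equiv.symm_apply_apply])
  have e2 : {x : Σ P : Finpartition s, Option {b // b ∈ P.parts} //
        (ins a ha x).parts.card = k + 1}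
      ≃ Σ P : Finpartition s, {o : Option {b // b ∈ P.parts} //
          (ins a ha ⟨P, o⟩).parts.card = k + 1} :=
    sigmaSubtype (fun P o => (ins a ha ⟨P, o⟩).parts.card = k + 1)
  rw [Nat.card_congr (e1.trans e2), Nat.card_eq_fintype_card, Fintype.card_sigma]
  have inner : ∀ P : Finpartition s,
      Fintype.card {o : Option {b // b ∈ P.parts} // (ins a ha ⟨P, o⟩).parts.card = k + 1}
        = (if P.parts.card = k then 1 else 0)
          + (if P.parts.card = k + 1 then P.parts.card else 0) := by
    intro P
    by_cases hk : P.parts.card = k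
    · have hk' : P.parts.card ≠ k + 1 := by omega
      rw [if_pos hk, if_neg hk']
      rw [Fintype.card_eq_one_iff]
      refine ⟨⟨none, by rw [ins_none_card, hk]⟩, ?_⟩
      rintro ⟨o, h⟩
      apply Subtype.ext
      cases o with
      | none => rfl
      | some b =>
        obtain ⟨b, hb⟩ := b
        rw [ins_some_card] at h
        omega
    · by_cases hk1 : P.parts.card = k + 1
      · rw [if_neg hk, if_pos hk1]
        have e3 : {o : Option {b // b ∈ P.parts} // (ins a ha ⟨P, o⟩).parts.card = k + 1}
            ≃ {b // b ∈ P.parts} := by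
          refine optionSubtypeEquiv ?_ ?_
          · rw [ins_none_card]; omega
          · rintro ⟨b, hb⟩
            rw [ins_some_card]; exact hk1
        rw [Fintype.card_congr e3, Fintype.card_coe]
        omega
      · rw [if_neg hk, if_neg hk1]
        rw [Fintype.card_eq_zero_iff]
        refine ⟨?_⟩
        rintro ⟨o, h⟩
        cases o with
        | none => rw [ins_none_card] at h; omega
        | some b =>
          obtain ⟨b, hb⟩ := b
          rw [ins_some_card] at h
          exact hk1 h
  simp only [inner]
  rw [Finset.sum_add_distrib]
  have h1 : ∑ P : Finpartition s, (if P.parts.card = k then 1 else 0)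
      = Nat.card {P : Finpartition s // P.parts.card = k} := by
    rw [Nat.card_eq_fintype_card, Fintype.card_subtype, Finset.card_filter]
  have h2 : ∑ P : Finpartition s, (if P.parts.card = k + 1 then P.parts.card else 0)
      = (k + 1) * Nat.card {P : Finpartition s // P.parts.card = k + 1} := by
    rw [Nat.card_eq_fintype_card, Fintype.card_subtype, Finset.card_filter, Finset.mul_sum]
    apply Finset.sum_congr rfl
    intro P _
    by_cases h : P.parts.card = k + 1
    · rw [if_pos h, if_pos h, h, mul_one]
    · rw [if_neg h, if_neg h, mul_zero]
  rw [h1, h2]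
  ring

end ECO

def St : ℕ → ℕ → ℕ
  | 0, 0 => 1
  | 0, _ + 1 => 0
  | _ + 1, 0 => 0
  | n + 1, k + 1 => (k + 1) * St n (k + 1) + St n k

namespace ECO

theorem card_finpartition : ∀ (n : ℕ) (s : Finset α), s.card = n → ∀ k : ℕ,
    Nat.card {P : Finpartition s // P.parts.card = k} = St n k := by
  intro n
  induction n with
  | zero =>
    intro s hs k
    rw [Finset.card_eq_zero] at hs
    subst hs
    cases k with
    | zero =>
      rw [St, Nat.card_eq_fintype_card, Fintype.card_eq_one_iff]
      refine ⟨⟨Finpartition.empty _, by simp [Finpartition.empty]⟩, ?_⟩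
      rintro ⟨P, hP⟩
      apply Subtype.ext
      ext c
      simp only [Finpartition.empty]
      rw [Finset.card_eq_zero] at hP
      simp [hP]
    | succ k =>
      rw [St, Nat.card_eq_zero]
      left
      refine ⟨?_⟩
      rintro ⟨P, hP⟩
      have : P.parts = ∅ := Finpartition.parts_eq_empty_iff.mpr rfl
      rw [this] at hP
      simp at hP
  | succ n ih =>
    intro s hs k
    obtain ⟨a, t, hat, rfl, ht⟩ := Finset.card_eq_succ.mp hs
    cases k with
    | zero =>
      rw [St, Nat.card_eq_zero]
      left
      refine ⟨?_⟩
      rintro ⟨P, hP⟩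
      rw [Finset.card_eq_zero, Finpartition.parts_eq_empty_iff] at hP
      have : a ∈ (⊥ : Finset α) := hP ▸ Finset.mem_insert_self a t
      simp at this
    | succ k =>
      rw [St, card_step hat k, ih t ht (k + 1), ih t ht k]

end ECO

theorem ECO.card_finpartition_total (n : ℕ) (s : Finset α) (hs : s.card = n) :
    Nat.card (Finpartition s) = ∑ k ∈ Finset.range (n + 1), St n k := by
  rw [Nat.card_eq_fintype_card, ← Finset.card_univ]
  rw [Finset.card_eq_sum_card_fiberwise (f := fun P : Finpartition s => P.parts.card)
    (t := Finset.range (n + 1)) (fun P _ => Finset.mem_range.mpr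
      (by show P.parts.card < n + 1; have := P.card_parts_le_card; omega))]
  apply Finset.sum_congr rfl
  intro k _
  rw [← ECO.card_finpartition n s hs k, Nat.card_eq_fintype_card, Fintype.card_subtype]


/-- for the ECO-system with axiom (1) and rule (k) ↝ (k)^{k-1}(k+1),
the number f n (k+1) of nodes at level n labeled k+1 is the Stirling number of the
second kind S(n,k) (the number of partitions of an n-set into k nonempty blocks);
consequently the total count t n is the Bell number B_n (the number of set partitions
of an n-set), whose exponential generating function E satisfies E' = e^z·E with
E(0) = 1 (i.e. E = exp(e^z - 1)), equivalently the Bell recurrence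
t_{n+1} = ∑_{j≤n} binom(n,j) t_j holds. -/
theorem stmt_17 (f : ℕ → ℕ → ℕ)
    (h0 : ∀ k, f 0 k = if k = 1 then 1 else 0)
    (hstep : ∀ n k, f (n + 1) k = (k - 1) * f n k + (if 1 ≤ k then f n (k - 1) else 0))
    (t : ℕ → ℕ) (ht : ∀ n, t n = ∑ k ∈ Finset.range (n + 2), f n k) :
    (∀ n k, f n (k + 1) =
      Nat.card {P : Finpartition (Finset.univ : Finset (Fin n)) // P.parts.card = k}) ∧
    (∀ n, t n = Nat.card (Finpartition (Finset.univ : Finset (Fin n)))) ∧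
    (derivativeFun (mk fun n => (t n : ℚ) / (Nat.factorial n : ℚ))
        = exp ℚ * mk fun n => (t n : ℚ) / (Nat.factorial n : ℚ)) ∧
    (∀ n, t (n + 1) = ∑ j ∈ Finset.range (n + 1), Nat.choose n j * t j) := by
  have hf0 : ∀ n, f n 0 = 0 := by
    intro n
    induction n with
    | zero => simp [h0]
    | succ n ih => simp [hstep, ih]
  have hfs : ∀ n k, f (n + 1) (k + 1) = k * f n (k + 1) + f n k := by
    intro n k
    rw [hstep]
    simp
  have hfSt : ∀ n k, f n (k + 1) = St n k := by
    intro n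
    induction n with
    | zero =>
      intro k
      cases k with
      | zero => simp [h0, St]
      | succ k => simp [h0, St]
    | succ n ih =>
      intro k
      cases k with
      | zero => rw [hfs, St, ih 0]; simp [hf0]
      | succ k => rw [hfs, St, ih (k + 1), ih k]
  have hcardn : ∀ n : ℕ, (Finset.univ : Finset (Fin n)).card = n := by simp
  have c1 : ∀ n k, f n (k + 1) =
      Nat.card {P : Finpartition (Finset.univ : Finset (Fin n)) // P.parts.card = k} := by
    intro n k
    rw [hfSt n k, ECO.card_finpartition n Finset.univ (hcardn n) k]
  -- top vanishing
  have hft : ∀ n k, n + 2 ≤ k → f n k = 0 := by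
    intro n
    induction n with
    | zero =>
      intro k hk
      rw [h0]
      simp only [ite_eq_right_iff]
      omega
    | succ n ih =>
      intro k hk
      rw [hstep]
      rcases k with _ | k
      · omega
      · rw [ih (k + 1) (by omega)]
        simp only [Nat.add_sub_cancel, mul_zero, zero_add, if_pos (by omega : 1 ≤ k + 1)]
        exact ih k (by omega)
  have c2 : ∀ n, t n = Nat.card (Finpartition (Finset.univ : Finset (Fin n))) := by
    intro n
    rw [ht n, ECO.card_finpartition_total n Finset.univ (hcardn n)]
    rw [Finset.sum_range_succ']
    rw [hf0, add_zero]
    apply Finset.sum_congr rfl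
    intro k _
    rw [hfSt]
  -- Bell recurrence key identity
  have key : ∀ n k, f (n + 1) (k + 1) = ∑ j ∈ Finset.range (n + 1), Nat.choose n j * f j k := by
    intro n
    induction n with
    | zero =>
      intro k
      rw [Finset.sum_range_one, hfs]
      simp only [Nat.choose_self, one_mul]
      cases k with
      | zero => simp [h0]
      | succ k => simp [h0]
    | succ n ih =>
      intro k
      cases k with
      | zero =>
        rw [hfs]
        simp [hf0]
      | succ m =>
        rw [hfs, ih (m + 1), ih m]
        have hC : ∑ j ∈ Finset.range (n + 1), Nat.choose n j * f (j + 1) (m + 1)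
            = m * (∑ j ∈ Finset.range (n + 1), Nat.choose n j * f j (m + 1))
              + ∑ j ∈ Finset.range (n + 1), Nat.choose n j * f j m := by
          rw [Finset.mul_sum, ← Finset.sum_add_distrib]
          apply Finset.sum_congr rfl
          intro j _
          rw [hfs]
          ring
        have hDA : ∑ j ∈ Finset.range (n + 1), Nat.choose n (j + 1) * f (j + 1) (m + 1)
              + f 0 (m + 1)
            = ∑ j ∈ Finset.range (n + 1), Nat.choose n j * f j (m + 1) := by
          have h5 := Finset.sum_range_succ' (fun j => Nat.choose n j * f j (m + 1)) (n + 1)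
          simp only [Nat.choose_zero_right, one_mul] at h5
          rw [← h5, Finset.sum_range_succ]
          simp [Nat.choose_succ_self]
        have hRHS : ∑ j ∈ Finset.range (n + 1 + 1), Nat.choose (n + 1) j * f j (m + 1)
            = ∑ j ∈ Finset.range (n + 1), Nat.choose n (j + 1) * f (j + 1) (m + 1)
              + ∑ j ∈ Finset.range (n + 1), Nat.choose n j * f (j + 1) (m + 1)
              + f 0 (m + 1) := by
          rw [Finset.sum_range_succ' (fun j => Nat.choose (n + 1) j * f j (m + 1))]
          simp only [Nat.choose_succ_succ, Nat.choose_zero_right, one_mul, add_mul]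
          rw [Finset.sum_add_distrib]
          ring
        rw [hRHS, hC, ← hDA]
        ring
  have c4 : ∀ n, t (n + 1) = ∑ j ∈ Finset.range (n + 1), Nat.choose n j * t j := by
    intro n
    rw [ht (n + 1), Finset.sum_range_succ' (fun k => f (n + 1) k), hf0, add_zero]
    have : ∀ k, f (n + 1) (k + 1) = ∑ j ∈ Finset.range (n + 1), Nat.choose n j * f j k :=
      key n
    calc ∑ k ∈ Finset.range (n + 2), f (n + 1) (k + 1)
        = ∑ k ∈ Finset.range (n + 2), ∑ j ∈ Finset.range (n + 1), Nat.choose n j * f j k := by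
          exact Finset.sum_congr rfl fun k _ => this k
      _ = ∑ j ∈ Finset.range (n + 1), ∑ k ∈ Finset.range (n + 2), Nat.choose n j * f j k :=
          Finset.sum_comm
      _ = ∑ j ∈ Finset.range (n + 1), Nat.choose n j * t j := by
          apply Finset.sum_congr rfl
          intro j hj
          rw [Finset.mem_range] at hj
          rw [← Finset.mul_sum, ht j]
          congr 1
          rw [← Finset.sum_subset (Finset.range_subset_range.mpr (by omega : j + 2 ≤ n + 2))]
          intro k hk hk2
          rw [Finset.mem_range] at hk
          rw [Finset.mem_range, not_lt] at hk2
          exact hft j k hk2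
  refine ⟨c1, c2, ?_, c4⟩
  ext n
  rw [show ∀ g : PowerSeries ℚ, coeff n g.derivativeFun = coeff n (d⁄dX ℚ g) from fun _ => rfl,
    PowerSeries.coeff_derivative, PowerSeries.coeff_mk, PowerSeries.coeff_mul]
  rw [Finset.Nat.sum_antidiagonal_eq_sum_range_succ_mk]
  have hlhs : (t (n + 1) : ℚ) / (Nat.factorial (n + 1) : ℚ) * (n + 1)
      = (t (n + 1) : ℚ) / (Nat.factorial n : ℚ) := by
    rw [Nat.factorial_succ]
    push_cast
    have h1 : (Nat.factorial n : ℚ) ≠ 0 := Nat.cast_ne_zero.mpr (Nat.factorial_ne_zero n)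
    field_simp
  rw [hlhs, c4 n]
  push_cast
  rw [Finset.sum_div]
  conv_rhs => rw [← Finset.sum_range_reflect]
  apply Finset.sum_congr rfl
  intro k hk
  rw [Finset.mem_range] at hk
  have hkn : k ≤ n := by omega
  have hr : n - (n - k) = k := by omega
  have h4 : n + 1 - 1 - k = n - k := by omega
  rw [h4, hr, PowerSeries.coeff_exp, PowerSeries.coeff_mk]
  simp only [Algebra.algebraMap_self, RingHom.id_apply]
  have h1 : (Nat.factorial k : ℚ) ≠ 0 := Nat.cast_ne_zero.mpr (Nat.factorial_ne_zero k)
  have h2 : (Nat.factorial (n - k) : ℚ) ≠ 0 := Nat.cast_ne_zero.mpr (Nat.factorial_ne_zero _)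
  have h3 : (Nat.factorial n : ℚ) ≠ 0 := Nat.cast_ne_zero.mpr (Nat.factorial_ne_zero n)
  rw [Nat.cast_choose ℚ hkn]
  field_simp
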